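/- For every n ∈ ℕ and |p| < 1, ∑_{j=0}^∞ ∑_{k=0}^{n+j} (min(n,j,k,n+j-k)+1) |p|^{2j} = (n+1)/(1-|p|²)². -/

import Mathlib

open Finset

lemma gauss_aux (m N : ℕ) (h : 2 * m ≤ N) :
    ∑ i ∈ Finset.range (m + 1), (N + 1 - 2 * i) = (m + 1) * (N + 1 - m) := by
  induction m with
  | zero => simp
  | succ m ih =>
    have h' : 2 * m ≤ N := by omega
    rw [Finset.sum_range_succ, ih h']
    have ha : 2 * (m + 1) ≤ N + 1 := by omega
    have hb : m ≤ N + 1 := by omega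
    have hc : m + 1 ≤ N + 1 := by omega
    zify [ha, hb, hc]
    ring

lemma key (n j : ℕ) :
    ∑ k ∈ Finset.range (n + j + 1), (min (min n j) (min k (n + j - k)) + 1)
      = (n + 1) * (j + 1) := by
  have h1 : ∀ k ∈ Finset.range (n + j + 1),
      min (min n j) (min k (n + j - k)) + 1
        = ∑ i ∈ Finset.range (j + 1), if i ≤ n ∧ i ≤ k ∧ k ≤ n + j - i then 1 else 0 := by
    intro k hk
    simp only [Finset.mem_range] at hk
    rw [← Finset.sum_filter, Finset.sum_const, smul_eq_mul, mul_one]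
    have : (Finset.range (j+1)).filter (fun i => i ≤ n ∧ i ≤ k ∧ k ≤ n + j - i)
        = Finset.range (min (min n j) (min k (n + j - k)) + 1) := by
      ext i
      simp only [Finset.mem_filter, Finset.mem_range]
      omega
    rw [this, Finset.card_range]
  rw [Finset.sum_congr rfl h1, Finset.sum_comm]
  have h2 : ∀ i ∈ Finset.range (j + 1),
      (∑ k ∈ Finset.range (n + j + 1), if i ≤ n ∧ i ≤ k ∧ k ≤ n + j - i then 1 else 0)
        = if i ≤ n then n + j + 1 - 2 * i else 0 := by
    intro i hi
    simp only [Finset.mem_range] at hi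
    by_cases hin : i ≤ n
    · rw [← Finset.sum_filter, Finset.sum_const, smul_eq_mul, mul_one, if_pos hin]
      have : (Finset.range (n+j+1)).filter (fun k => i ≤ n ∧ i ≤ k ∧ k ≤ n + j - i)
          = Finset.Icc i (n + j - i) := by
        ext k
        simp only [Finset.mem_filter, Finset.mem_range, Finset.mem_Icc]
        omega
      rw [this, Nat.card_Icc]
      omega
    · rw [if_neg hin]
      simp [hin]
  rw [Finset.sum_congr rfl h2]
  by_cases hj : j ≤ n
  · have : ∀ i ∈ Finset.range (j + 1), (if i ≤ n then n + j + 1 - 2 * i else 0)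
        = (n + j) + 1 - 2 * i := by
      intro i hi
      simp only [Finset.mem_range] at hi
      rw [if_pos (by omega)]
    rw [Finset.sum_congr rfl this, gauss_aux j (n + j) (by omega)]
    have : n + j + 1 - j = n + 1 := by omega
    rw [this]
    ring
  · have hfil : (Finset.range (j+1)).filter (fun i => i ≤ n) = Finset.range (n + 1) := by
      ext i
      simp only [Finset.mem_filter, Finset.mem_range]
      omega
    rw [← Finset.sum_filter, hfil, gauss_aux n (n + j) (by omega)]
    have : n + j + 1 - n = j + 1 := by omega
    rw [this]

theorem stmt_11 (n : ℕ) (p : ℂ) (hp : ‖p‖ < 1) :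
    HasSum (fun j : ℕ => ∑ k ∈ Finset.range (n + j + 1),
        ((min (min n j) (min k (n + j - k)) + 1 : ℕ) : ℝ) * ‖p‖ ^ (2 * j))
      (((n : ℝ) + 1) / (1 - ‖p‖ ^ 2) ^ 2) := by
  set x : ℝ := ‖p‖ with hx
  have hx0 : 0 ≤ x := norm_nonneg p
  set y : ℝ := x ^ 2 with hy
  have hy0 : 0 ≤ y := sq_nonneg x
  have hy1 : y < 1 := by
    have : x ^ 2 < 1 ^ 2 := by nlinarith
    simpa [hy] using this
  have hyn : ‖y‖ < 1 := by rwa [Real.norm_eq_abs, abs_of_nonneg hy0]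
  -- the function simplifies
  have hfun : ∀ j : ℕ, (∑ k ∈ Finset.range (n + j + 1),
      ((min (min n j) (min k (n + j - k)) + 1 : ℕ) : ℝ) * x ^ (2 * j))
      = ((n : ℝ) + 1) * (((j : ℝ) + 1) * y ^ j) := by
    intro j
    rw [← Finset.sum_mul, ← Nat.cast_sum, key n j]
    push_cast
    rw [pow_mul]
    ring
  have h1 : HasSum (fun j : ℕ => (j : ℝ) * y ^ j) (y / (1 - y) ^ 2) :=
    hasSum_coe_mul_geometric_of_norm_lt_one hyn
  have h2 : HasSum (fun j : ℕ => y ^ j) (1 / (1 - y)) := by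
    simpa using hasSum_geometric_of_norm_lt_one hyn
  have h3 : HasSum (fun j : ℕ => ((j : ℝ) + 1) * y ^ j) (1 / (1 - y) ^ 2) := by
    have := h1.add h2
    have heq : y / (1 - y) ^ 2 + 1 / (1 - y) = 1 / (1 - y) ^ 2 := by
      have h1y : (1 : ℝ) - y ≠ 0 := by nlinarith
      field_simp
      ring
    rw [heq] at this
    convert this using 2 with j
    ring
  have h4 := h3.mul_left ((n : ℝ) + 1)
  have : ((n : ℝ) + 1) * (1 / (1 - y) ^ 2) = ((n : ℝ) + 1) / (1 - y) ^ 2 := by ring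
  rw [this] at h4
  convert h4 using 1
  · rfl
  funext j
  exact hfun j
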